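/- Let p be an odd prime. For any symmetric matrix G ∈ M_n(ℤ_p) (n ≥ 1), there exists a matrix T ∈ M_{2n,n}(ℤ_p) extendable to an element of GL_{2n}(ℤ_p) such that TᵗHT = G, where H is the Gram matrix of the orthogonal sum of n hyperbolic planes ℍⁿ. In other words, ℍⁿ is primitively n-universal over ℤ_p. -/

import Mathlib

open Matrix

/-- `G` is primitively represented by `H`: there is an isometric embedding of the quadratic
lattice with Gram matrix `G` onto a direct summand of the lattice with Gram matrix `H`, i.e.
a matrix `T` with `Tᵀ H T = G` whose columns span a direct summand of `Rᵐ` (equivalently, over a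
local ring, `T` can be completed to an invertible square matrix). -/
def PrimRep {R : Type*} [CommRing R] {ι κ : Type*} [Fintype ι] [Fintype κ] [DecidableEq κ]
    (G : Matrix κ κ R) (H : Matrix ι ι R) : Prop :=
  ∃ T : Matrix ι κ R, Tᵀ * H * T = G ∧ ∃ P : Matrix κ ι R, P * T = 1

/-- The Gram matrix of the orthogonal sum of `n` hyperbolic planes `ℍⁿ`. -/
def HypN (R : Type*) [CommRing R] (n : ℕ) :
    Matrix (Fin n × Fin 2) (Fin n × Fin 2) R := fun p q =>
  if p.1 = q.1 ∧ p.2 ≠ q.2 then 1 else 0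

/-- For any odd prime `p`, `ℍⁿ` is primitively `n`-universal over `ℤ_p`. -/
theorem HypN_primitively_universal_odd (p : ℕ) [Fact p.Prime] (hp : p ≠ 2)
    (n : ℕ) (hn : 1 ≤ n) (G : Matrix (Fin n) (Fin n) ℤ_[p])
    (hG : G.IsSymm) (hdet : G.det ≠ 0) :
    PrimRep G (HypN ℤ_[p] n) := by
  classical
  -- 2 is a unit in ℤ_[p] since p is odd
  have hnorm : ‖(2 : ℤ_[p])‖ = 1 := by
    have hle := PadicInt.norm_le_one (2 : ℤ_[p])
    rcases lt_or_eq_of_le hle with h | h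
    · exfalso
      have h2 : ‖((2 : ℤ) : ℤ_[p])‖ < 1 := by exact_mod_cast h
      have := (PadicInt.norm_int_lt_one_iff_dvd 2).mp h2
      have hple : (p : ℤ) ≤ 2 := Int.le_of_dvd (by norm_num) this
      have hp2 : 2 ≤ p := (Fact.out : p.Prime).two_le
      have : p = 2 := by omega
      exact hp this
    · exact h
  have h2 : IsUnit (2 : ℤ_[p]) := PadicInt.isUnit_iff.mpr hnorm
  obtain ⟨u, hu⟩ := h2
  set b : ℤ_[p] := ((u⁻¹ : ℤ_[p]ˣ) : ℤ_[p]) with hbdef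
  have hb : 2 * b = 1 := by
    rw [← hu, hbdef]
    exact u.mul_inv
  refine ⟨Matrix.of fun q j => if q.2 = 0 then (if q.1 = j then 1 else 0) else b * G q.1 j,
    ?_, Matrix.of fun j q => if q.2 = 0 ∧ q.1 = j then 1 else 0, ?_⟩
  · ext j j'
    simp only [Matrix.mul_apply, Matrix.transpose_apply, HypN, Fintype.sum_prod_type, Matrix.of_apply,
      Fin.sum_univ_two]
    simp only [Finset.sum_ite_eq, Finset.sum_ite_eq', Finset.mem_univ, if_true]
    simp only [show (0 : Fin 2) ≠ 1 by decide, show (1 : Fin 2) ≠ 0 by decide,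
      ne_eq, not_true, not_false_iff]
    simp
    have hsym : G j' j = G j j' := by
      conv_lhs => rw [← hG]
      rfl
    rw [Finset.sum_add_distrib]
    simp only [Finset.sum_ite_eq', Finset.mem_univ, if_true]
    rw [hsym]
    calc b * G j j' + b * G j j' = (2 * b) * G j j' := by ring
      _ = G j j' := by rw [hb, one_mul]
  · ext j j'
    simp only [Matrix.mul_apply, Fintype.sum_prod_type, Fin.sum_univ_two, Matrix.of_apply]
    simp [Matrix.one_apply, eq_comm]
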